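/- For every x ∈ ℝ^n and every (u, w) ∈ F one has θ(x, u) ≥ β(u, w). Consequently, inf_{x ∈ ℝ^n} sup_{‖u‖ ≤ 1} θ(x, u) ≥ sup_{(u,w) ∈ F} β(u, w) (weak duality for the p = 2 regularized Taylor subproblem). -/

import Mathlib

open scoped BigOperators RealInnerProductSpace

noncomputable section

variable {n m : ℕ}

/-- `H(u, w) = Σ_i u_i A_i + B + (w/2) I_n`. -/
def Hmat (A : Fin m → Matrix (Fin n) (Fin n) ℝ) (B : Matrix (Fin n) (Fin n) ℝ)
    (u : EuclideanSpace ℝ (Fin m)) (w : ℝ) : Matrix (Fin n) (Fin n) ℝ :=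
  ∑ i, u i • A i + B + (w / 2) • (1 : Matrix (Fin n) (Fin n) ℝ)

/-- `G(u) = Σ_i u_i b_i + a + B x̄`. -/
def Gvec (B : Matrix (Fin n) (Fin n) ℝ) (b : Fin m → EuclideanSpace ℝ (Fin n))
    (a xb : EuclideanSpace ℝ (Fin n)) (u : EuclideanSpace ℝ (Fin m)) :
    EuclideanSpace ℝ (Fin n) :=
  ∑ i, u i • b i + a + Matrix.toEuclideanCLM (𝕜 := ℝ) B xb

/-- `l(u) = Σ_i u_i c_i`. -/
def lfun (c : Fin m → ℝ) (u : EuclideanSpace ℝ (Fin m)) : ℝ :=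
  ∑ i, u i * c i

/-- The primal function
`θ(x, u) = l(u) + ⟨G(u), x − x̄⟩ + (1/2)⟨(Σ u_i A_i + B)(x − x̄), x − x̄⟩ + (M/6)‖x − x̄‖³`. -/
def θfun (A : Fin m → Matrix (Fin n) (Fin n) ℝ) (B : Matrix (Fin n) (Fin n) ℝ)
    (b : Fin m → EuclideanSpace ℝ (Fin n)) (a : EuclideanSpace ℝ (Fin n))
    (c : Fin m → ℝ) (xb : EuclideanSpace ℝ (Fin n)) (M : ℝ)
    (x : EuclideanSpace ℝ (Fin n)) (u : EuclideanSpace ℝ (Fin m)) : ℝ :=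
  lfun c u + ⟪Gvec B b a xb u, x - xb⟫ +
    (1 / 2) * ⟪Matrix.toEuclideanCLM (𝕜 := ℝ) (∑ i, u i • A i + B) (x - xb), x - xb⟫ +
    M / 6 * ‖x - xb‖ ^ 3

/-- The dual function
`β(u, w) = l(u) − (1/2)⟨H(u,w)⁻¹ G(u), G(u)⟩ − w³/(12M²)`. -/
def βfun (A : Fin m → Matrix (Fin n) (Fin n) ℝ) (B : Matrix (Fin n) (Fin n) ℝ)
    (b : Fin m → EuclideanSpace ℝ (Fin n)) (a : EuclideanSpace ℝ (Fin n))
    (c : Fin m → ℝ) (xb : EuclideanSpace ℝ (Fin n)) (M : ℝ)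
    (u : EuclideanSpace ℝ (Fin m)) (w : ℝ) : ℝ :=
  lfun c u -
    (1 / 2) * ⟪Matrix.toEuclideanCLM (𝕜 := ℝ) (Hmat A B u w)⁻¹ (Gvec B b a xb u),
      Gvec B b a xb u⟫ -
    w ^ 3 / (12 * M ^ 2)

/-- The dual feasible set `F = {(u, w) : ‖u‖ ≤ 1, w ≥ 0, H(u, w) ≻ 0}`. -/
def Feas (A : Fin m → Matrix (Fin n) (Fin n) ℝ) (B : Matrix (Fin n) (Fin n) ℝ) :
    Set (EuclideanSpace ℝ (Fin m) × ℝ) :=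
  {uw | ‖uw.1‖ ≤ 1 ∧ 0 ≤ uw.2 ∧ (Hmat A B uw.1 uw.2).PosDef}

lemma clm_inner {n : ℕ} (M : Matrix (Fin n) (Fin n) ℝ) (x y : EuclideanSpace ℝ (Fin n)) :
    ⟪Matrix.toEuclideanCLM (𝕜 := ℝ) M x, y⟫ =
      dotProduct (M.mulVec (WithLp.equiv 2 _ x)) (WithLp.equiv 2 _ y) := by
  rw [EuclideanSpace.inner_eq_star_dotProduct, dotProduct_comm]
  simp [Matrix.toEuclideanCLM_toLp]

lemma posdef_inner_nonneg {n : ℕ} {M : Matrix (Fin n) (Fin n) ℝ} (h : M.PosDef)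
    (x : EuclideanSpace ℝ (Fin n)) : 0 ≤ ⟪Matrix.toEuclideanCLM (𝕜 := ℝ) M x, x⟫ := by
  rw [clm_inner, dotProduct_comm]
  simpa using h.posSemidef.dotProduct_mulVec_nonneg (WithLp.equiv 2 _ x)

lemma clm_symm {n : ℕ} {M : Matrix (Fin n) (Fin n) ℝ} (h : M.IsHermitian)
    (x y : EuclideanSpace ℝ (Fin n)) :
    ⟪Matrix.toEuclideanCLM (𝕜 := ℝ) M x, y⟫ = ⟪x, Matrix.toEuclideanCLM (𝕜 := ℝ) M y⟫ := by
  have := (Matrix.isHermitian_iff_isSymmetric.mp h) x y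
  simpa [← Matrix.coe_toEuclideanCLM_eq_toEuclideanLin] using this

lemma posdef_add_large {n : ℕ} {B : Matrix (Fin n) (Fin n) ℝ} (hB : B.IsHermitian) :
    (B + (‖Matrix.toEuclideanCLM (𝕜 := ℝ) B‖ + 1) • (1 : Matrix (Fin n) (Fin n) ℝ)).PosDef := by
  set c : ℝ := ‖Matrix.toEuclideanCLM (𝕜 := ℝ) B‖ + 1 with hc
  refine Matrix.PosDef.of_dotProduct_mulVec_pos (hB.add (by simp [Matrix.IsHermitian])) fun x hx => ?_
  set x' : EuclideanSpace ℝ (Fin n) := (WithLp.equiv 2 _).symm x with hx'def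
  have hx' : x' ≠ 0 := fun h => hx (by simpa [x'] using congrArg (WithLp.equiv 2 (Fin n → ℝ)) h)
  have hxpos : 0 < ‖x'‖ := norm_pos_iff.mpr hx'
  have hkey : dotProduct (star x) ((B + c • 1).mulVec x)
      = ⟪Matrix.toEuclideanCLM (𝕜 := ℝ) B x', x'⟫ + c * ‖x'‖ ^ 2 := by
    rw [clm_inner, ← real_inner_self_eq_norm_sq, EuclideanSpace.inner_eq_star_dotProduct]
    simp [Matrix.add_mulVec, Matrix.smul_mulVec, dotProduct_add,
      dotProduct_smul, dotProduct_comm, x', smul_eq_mul]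
  rw [hkey]
  have h1 : |⟪Matrix.toEuclideanCLM (𝕜 := ℝ) B x', x'⟫| ≤ ‖Matrix.toEuclideanCLM (𝕜 := ℝ) B‖ * ‖x'‖ * ‖x'‖ := by
    calc |⟪Matrix.toEuclideanCLM (𝕜 := ℝ) B x', x'⟫| ≤ ‖Matrix.toEuclideanCLM (𝕜 := ℝ) B x'‖ * ‖x'‖ :=
          abs_real_inner_le_norm _ _
      _ ≤ ‖Matrix.toEuclideanCLM (𝕜 := ℝ) B‖ * ‖x'‖ * ‖x'‖ := by
          gcongr; exact (Matrix.toEuclideanCLM (𝕜 := ℝ) B).le_opNorm x'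
  have h2 := abs_le.mp h1
  nlinarith [hxpos, sq_nonneg ‖x'‖, norm_nonneg (Matrix.toEuclideanCLM (𝕜 := ℝ) B)]

lemma weak_ineq {n m : ℕ}
    (A : Fin m → Matrix (Fin n) (Fin n) ℝ) (B : Matrix (Fin n) (Fin n) ℝ)
    (b : Fin m → EuclideanSpace ℝ (Fin n)) (a : EuclideanSpace ℝ (Fin n))
    (c : Fin m → ℝ) (xb : EuclideanSpace ℝ (Fin n)) (M : ℝ) (hM : 0 < M)
    (x : EuclideanSpace ℝ (Fin n)) (u : EuclideanSpace ℝ (Fin m)) (w : ℝ)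
    (hfeas : (u, w) ∈ Feas A B) :
    βfun A B b a c xb M u w ≤ θfun A B b a c xb M x u := by
  obtain ⟨hu, hw, hpd⟩ := hfeas
  set s : EuclideanSpace ℝ (Fin n) := x - xb with hs
  set G : EuclideanSpace ℝ (Fin n) := Gvec B b a xb u with hG
  set H : Matrix (Fin n) (Fin n) ℝ := Hmat A B u w with hH
  set T := Matrix.toEuclideanCLM (𝕜 := ℝ) H with hT
  set Ti := Matrix.toEuclideanCLM (𝕜 := ℝ) H⁻¹ with hTi
  have hTTi : ∀ v, T (Ti v) = v := by
    intro v
    have hdet : IsUnit H.det := isUnit_iff_ne_zero.mpr hpd.det_pos.ne'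
    have hHinv : H * H⁻¹ = 1 := Matrix.mul_nonsing_inv _ hdet
    have h2 := congrArg (Matrix.toEuclideanCLM (𝕜 := ℝ)) hHinv
    rw [map_mul, map_one] at h2
    calc T (Ti v) = (T * Ti) v := rfl
      _ = v := by rw [h2]; rfl
  have hsym : ∀ v v', ⟪T v, v'⟫ = ⟪v, T v'⟫ := clm_symm hpd.isHermitian
  set y : EuclideanSpace ℝ (Fin n) := s + Ti G with hy
  have hTy : T y = T s + G := by rw [hy, map_add, hTTi]
  have hexpand : ⟪T y, y⟫ = ⟪T s, s⟫ + 2 * ⟪G, s⟫ + ⟪Ti G, G⟫ := by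
    rw [hTy, hy, inner_add_left, inner_add_right, inner_add_right]
    have e1 : ⟪T s, Ti G⟫ = ⟪G, s⟫ := by
      rw [hsym, hTTi, real_inner_comm]
    have e2 : ⟪G, Ti G⟫ = ⟪Ti G, G⟫ := real_inner_comm _ _
    rw [e1, e2]; ring
  have hnn1 : 0 ≤ ⟪T y, y⟫ := posdef_inner_nonneg hpd y
  have hPs : Matrix.toEuclideanCLM (𝕜 := ℝ) (∑ i, u i • A i + B) s = T s - (w / 2) • s := by
    have hPH : (∑ i, u i • A i + B) = H - (w / 2) • 1 := by
      rw [hH, Hmat]; abel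
    have hmap : Matrix.toEuclideanCLM (𝕜 := ℝ) (H - (w / 2) • (1 : Matrix (Fin n) (Fin n) ℝ))
        = T - (w / 2) • (1 : EuclideanSpace ℝ (Fin n) →L[ℝ] EuclideanSpace ℝ (Fin n)) := by
      rw [map_sub, map_smul, map_one]
    rw [hPH, hmap]
    simp [ContinuousLinearMap.sub_apply, ContinuousLinearMap.smul_apply,
      ContinuousLinearMap.one_apply]
  have hquad : ⟪Matrix.toEuclideanCLM (𝕜 := ℝ) (∑ i, u i • A i + B) s, s⟫
      = ⟪T s, s⟫ - (w / 2) * ‖s‖ ^ 2 := by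
    rw [hPs, inner_sub_left, real_inner_smul_left, real_inner_self_eq_norm_sq]
  have hcubic : 0 ≤ M / 6 * ‖s‖ ^ 3 - w / 4 * ‖s‖ ^ 2 + w ^ 3 / (12 * M ^ 2) := by
    have hid : M / 6 * ‖s‖ ^ 3 - w / 4 * ‖s‖ ^ 2 + w ^ 3 / (12 * M ^ 2)
        = ((M * ‖s‖ - w) ^ 2 * (2 * M * ‖s‖ + w)) / (12 * M ^ 2) := by
      field_simp
      ring
    rw [hid]
    have : (0:ℝ) ≤ 2 * M * ‖s‖ + w := by positivity
    positivity
  rw [βfun, θfun, hquad]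
  rw [← hG, ← hs, ← hH, ← hTi]
  linarith [hnn1, hexpand, hcubic]

lemma theta_continuous {n m : ℕ}
    (A : Fin m → Matrix (Fin n) (Fin n) ℝ) (B : Matrix (Fin n) (Fin n) ℝ)
    (b : Fin m → EuclideanSpace ℝ (Fin n)) (a : EuclideanSpace ℝ (Fin n))
    (c : Fin m → ℝ) (xb : EuclideanSpace ℝ (Fin n)) (M : ℝ)
    (x : EuclideanSpace ℝ (Fin n)) :
    Continuous (fun u : EuclideanSpace ℝ (Fin m) => θfun A B b a c xb M x u) := by
  have h1 : Continuous (fun u : EuclideanSpace ℝ (Fin m) => lfun c u) := by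
    unfold lfun
    exact continuous_finset_sum _ fun i _ => (EuclideanSpace.proj i).continuous.mul continuous_const
  have h2 : Continuous (fun u : EuclideanSpace ℝ (Fin m) => Gvec B b a xb u) := by
    unfold Gvec
    exact ((continuous_finset_sum _ fun i _ =>
      (EuclideanSpace.proj i).continuous.smul continuous_const).add continuous_const).add
      continuous_const
  have h3 : Continuous (fun u : EuclideanSpace ℝ (Fin m) => (⟪Gvec B b a xb u, x - xb⟫ : ℝ)) :=
    h2.inner continuous_const
  have hrw : ∀ u : EuclideanSpace ℝ (Fin m),
      Matrix.toEuclideanCLM (𝕜 := ℝ) (∑ i, u i • A i + B) (x - xb)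
        = ∑ i, u i • (Matrix.toEuclideanCLM (𝕜 := ℝ) (A i) (x - xb))
          + Matrix.toEuclideanCLM (𝕜 := ℝ) B (x - xb) := by
    intro u
    rw [map_add, map_sum]
    simp [ContinuousLinearMap.sum_apply]
  have h4 : Continuous (fun u : EuclideanSpace ℝ (Fin m) =>
      (⟪Matrix.toEuclideanCLM (𝕜 := ℝ) (∑ i, u i • A i + B) (x - xb), x - xb⟫ : ℝ)) := by
    have : (fun u : EuclideanSpace ℝ (Fin m) =>
        (⟪Matrix.toEuclideanCLM (𝕜 := ℝ) (∑ i, u i • A i + B) (x - xb), x - xb⟫ : ℝ))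
        = fun u => (⟪∑ i, u i • (Matrix.toEuclideanCLM (𝕜 := ℝ) (A i) (x - xb))
          + Matrix.toEuclideanCLM (𝕜 := ℝ) B (x - xb), x - xb⟫ : ℝ) := by
      funext u; rw [hrw u]
    rw [this]
    exact ((continuous_finset_sum _ fun i _ =>
      (EuclideanSpace.proj i).continuous.smul continuous_const).add
      continuous_const).inner continuous_const
  unfold θfun
  exact ((h1.add h3).add (continuous_const.mul h4)).add continuous_const

/-- weak duality for the `p = 2` regularized Taylor subproblem:
`β(u, w) ≤ θ(x, u)` for every `x` and every dual-feasible `(u, w)`, hence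
`inf_x sup_{‖u‖≤1} θ(x, u) ≥ sup_{(u,w) ∈ F} β(u, w)`. -/
theorem stmt12 {n m : ℕ} (hn : 1 ≤ n) (hm : 1 ≤ m)
    (A : Fin m → Matrix (Fin n) (Fin n) ℝ) (B : Matrix (Fin n) (Fin n) ℝ)
    (hA : ∀ i, (A i).IsSymm) (hB : B.IsSymm)
    (b : Fin m → EuclideanSpace ℝ (Fin n)) (a : EuclideanSpace ℝ (Fin n))
    (c : Fin m → ℝ) (xb : EuclideanSpace ℝ (Fin n)) (M : ℝ) (hM : 0 < M) :
    (∀ (x : EuclideanSpace ℝ (Fin n)) (u : EuclideanSpace ℝ (Fin m)) (w : ℝ),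
      (u, w) ∈ Feas A B → βfun A B b a c xb M u w ≤ θfun A B b a c xb M x u) ∧
    sSup {t : ℝ | ∃ u w, (u, w) ∈ Feas A B ∧ t = βfun A B b a c xb M u w} ≤
      sInf {v : ℝ | ∃ x : EuclideanSpace ℝ (Fin n),
        v = sSup {t : ℝ | ∃ u : EuclideanSpace ℝ (Fin m),
          ‖u‖ ≤ 1 ∧ t = θfun A B b a c xb M x u}} := by
  have part1 : ∀ (x : EuclideanSpace ℝ (Fin n)) (u : EuclideanSpace ℝ (Fin m)) (w : ℝ),
      (u, w) ∈ Feas A B → βfun A B b a c xb M u w ≤ θfun A B b a c xb M x u :=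
    fun x u w h => weak_ineq A B b a c xb M hM x u w h
  refine ⟨part1, ?_⟩
  -- feasible point (0, w0)
  set w0 : ℝ := 2 * (‖Matrix.toEuclideanCLM (𝕜 := ℝ) B‖ + 1) with hw0
  have hBH : B.IsHermitian := by
    rwa [Matrix.IsHermitian, Matrix.conjTranspose_eq_transpose_of_trivial]
  have hfeas0 : ((0 : EuclideanSpace ℝ (Fin m)), w0) ∈ Feas A B := by
    refine ⟨by simp, ?_, ?_⟩
    · have := norm_nonneg (Matrix.toEuclideanCLM (𝕜 := ℝ) B)
      rw [hw0]; linarith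
    have hHm : Hmat A B (0 : EuclideanSpace ℝ (Fin m)) w0
        = B + (‖Matrix.toEuclideanCLM (𝕜 := ℝ) B‖ + 1) • (1 : Matrix (Fin n) (Fin n) ℝ) := by
      have hdiv : w0 / 2 = ‖Matrix.toEuclideanCLM (𝕜 := ℝ) B‖ + 1 := by rw [hw0]; ring
      rw [Hmat, hdiv]
      have hzero : (∑ i, (0 : EuclideanSpace ℝ (Fin m)) i • A i) = (0 : Matrix (Fin n) (Fin n) ℝ) :=
        Finset.sum_eq_zero fun i _ => zero_smul ℝ (A i)
      rw [hzero, zero_add]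
    rw [hHm]
    exact posdef_add_large hBH
  set D : Set ℝ := {t : ℝ | ∃ u w, (u, w) ∈ Feas A B ∧ t = βfun A B b a c xb M u w} with hD
  have hDne : D.Nonempty := ⟨βfun A B b a c xb M 0 w0, 0, w0, hfeas0, rfl⟩
  refine le_csInf ⟨_, 0, rfl⟩ ?_
  rintro v ⟨x, rfl⟩
  refine csSup_le hDne ?_
  rintro t ⟨u, w, hfeas, rfl⟩
  -- t = β(u,w) ≤ θ(x,u) ≤ sSup {θ(x,u') : ‖u'‖ ≤ 1}
  have hset : {t : ℝ | ∃ u : EuclideanSpace ℝ (Fin m), ‖u‖ ≤ 1 ∧ t = θfun A B b a c xb M x u}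
      = (fun u => θfun A B b a c xb M x u) '' Metric.closedBall 0 1 := by
    ext t
    simp [Set.mem_image, Metric.mem_closedBall, dist_zero_right, eq_comm, and_comm]
  have hbdd : BddAbove {t : ℝ | ∃ u : EuclideanSpace ℝ (Fin m),
      ‖u‖ ≤ 1 ∧ t = θfun A B b a c xb M x u} := by
    rw [hset]
    exact ((isCompact_closedBall (0 : EuclideanSpace ℝ (Fin m)) 1).image
      (theta_continuous A B b a c xb M x)).bddAbove
  have hm1 : θfun A B b a c xb M x u ∈ {t : ℝ | ∃ u : EuclideanSpace ℝ (Fin m),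
      ‖u‖ ≤ 1 ∧ t = θfun A B b a c xb M x u} := ⟨u, hfeas.1, rfl⟩
  exact le_trans (part1 x u w hfeas) (le_csSup hbdd hm1)

end
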